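/- Let V_h ⊆ V be a closed subspace of a Hilbert space, d : V → W bounded linear with d(V_h) ⊆ W_h for a closed subspace W_h ⊆ W, and suppose the discrete Poincaré inequality ‖v_h‖ ≤ c_dP ‖d v_h‖ holds for all v_h in V_h orthogonal (in V_h) to ker(d|_{V_h}). If moreover every element of ker(d|_{V_h}) lies in the range of a bounded operator d⁻ restricted to a subspace V_h⁻ (discrete exactness), then every v_h ∈ V_h decomposes as v_h = d⁻ τ_h + v_h^⊥ with τ_h ∈ V_h⁻, v_h^⊥ ⟂ ker(d|_{V_h}), ‖v_h^⊥‖ ≤ c_dP ‖d v_h‖, and ‖d⁻ τ_h‖ ≤ ‖v_h‖. -/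

import Mathlib

open RealInnerProductSpace

/-- discrete Hodge decomposition with discrete Poincaré inequality:
every `v_h ∈ V_h` decomposes as `v_h = d⁻ τ_h + v_h^⊥` with `τ_h ∈ V_h⁻`,
`v_h^⊥ ⟂ ker(d|_{V_h})`, `‖v_h^⊥‖ ≤ c_dP ‖d v_h‖` and `‖d⁻ τ_h‖ ≤ ‖v_h‖`. -/
theorem stmt9
    {Vm V W : Type*} [NormedAddCommGroup Vm] [InnerProductSpace ℝ Vm]
    [NormedAddCommGroup V] [InnerProductSpace ℝ V] [CompleteSpace V]
    [NormedAddCommGroup W] [InnerProductSpace ℝ W]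
    (dm : Vm →L[ℝ] V) (d : V →L[ℝ] W)
    (Vhm : Submodule ℝ Vm) (Vh : Submodule ℝ V) (Wh : Submodule ℝ W)
    (hVh_closed : IsClosed (Vh : Set V))
    (hmap : ∀ v ∈ Vh, d v ∈ Wh)
    (hsub : ∀ τ ∈ Vhm, dm τ ∈ Vh)
    (cdP : ℝ) (hcdP : 0 < cdP)
    (hdPoincare : ∀ v ∈ Vh, (∀ z ∈ Vh, d z = 0 → ⟪v, z⟫ = 0) → ‖v‖ ≤ cdP * ‖d v‖)
    (hexact : ∀ z ∈ Vh, d z = 0 → ∃ τ ∈ Vhm, dm τ = z) :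
    ∀ v ∈ Vh, ∃ τ ∈ Vhm, ∃ vp : V,
      v = dm τ + vp ∧ (∀ z ∈ Vh, d z = 0 → ⟪vp, z⟫ = 0) ∧
      ‖vp‖ ≤ cdP * ‖d v‖ ∧ ‖dm τ‖ ≤ ‖v‖ := by
  intro v hv
  -- the discrete kernel
  set K : Submodule ℝ V := Vh ⊓ LinearMap.ker (d : V →ₗ[ℝ] W) with hK
  have hKclosed : IsClosed (K : Set V) := by
    have : (K : Set V) = (Vh : Set V) ∩ (LinearMap.ker (d : V →ₗ[ℝ] W) : Set V) := rfl
    rw [this]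
    exact hVh_closed.inter (isClosed_singleton.preimage d.continuous)
  haveI : CompleteSpace K := hKclosed.completeSpace_coe
  set z : V := (K.orthogonalProjection v : V) with hz
  have hzK : z ∈ K := (K.orthogonalProjection v).2
  set vp : V := v - z with hvp
  have hvpo : vp ∈ Kᗮ := K.sub_starProjection_mem_orthogonal v
  have horth : ∀ w ∈ Vh, d w = 0 → ⟪vp, w⟫ = 0 := by
    intro w hw hdw
    have hwK : w ∈ K := ⟨hw, hdw⟩
    have := hvpo w hwK
    rwa [real_inner_comm] at this
  have hvpVh : vp ∈ Vh := Vh.sub_mem hv hzK.1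
  have hdz : d z = 0 := hzK.2
  have hdvp : d vp = d v := by
    simp [hvp, map_sub, hdz]
  have hnorm_vp : ‖vp‖ ≤ cdP * ‖d v‖ := by
    have := hdPoincare vp hvpVh horth
    rwa [hdvp] at this
  obtain ⟨τ, hτ, hdmτ⟩ := hexact z hzK.1 hdz
  refine ⟨τ, hτ, vp, ?_, horth, hnorm_vp, ?_⟩
  · rw [hdmτ, hvp]; abel
  · rw [hdmτ]
    have hinner : ⟪z, vp⟫ = 0 := hvpo z hzK
    have hinner2 : ⟪vp, z⟫ = 0 := by rw [real_inner_comm]; exact hinner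
    have hv_eq : v = z + vp := by rw [hvp]; abel
    have hsq : ‖v‖ ^ 2 = ‖z‖ ^ 2 + ‖vp‖ ^ 2 := by
      rw [hv_eq, ← real_inner_self_eq_norm_sq, ← real_inner_self_eq_norm_sq,
        ← real_inner_self_eq_norm_sq, inner_add_add_self, hinner, hinner2]
      ring
    nlinarith [norm_nonneg v, norm_nonneg z, norm_nonneg vp]
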